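/- Let 0 < q₀ < 1 and let X be a random variable with law (1−q₀)·δ_0 + q₀·Unif(0,1). For b ∈ ℕ define the weight w_b(a) = −log₂ P(⌊2^b X⌋ = a) for a ∈ ℤ, and for u ∈ [0,1)^n define c_w(u) = Σ_{i=1}^n w_b(⌊2^b u_i⌋). Then there exist a constant C (depending only on q₀), a real number κ_b (independent of u), and γ_b ∈ ℝ with |γ_b| ≤ C/b, such that for all b ≥ 1 and all u ∈ [0,1)^n: (1/b)·c_w(u) = (1+γ_b)·|{i : ⌊2^b u_i⌋ ≠ 0}| + κ_b. Consequently, for every λ > 0 and y ∈ ℝ^n, the minimizers over u ∈ [0,1)^n of ‖y − u‖₂² + (λ/b)·c_w(u) coincide with the minimizers of ‖y − u‖₂² + λ·(1+γ_b)·|{i : ⌊2^b u_i⌋ ≠ 0}|. -/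

import Mathlib

open MeasureTheory
open scoped ENNReal

/-- The law of the sparse source: `(1-q₀)·δ₀ + q₀·Unif(0,1)`. -/
noncomputable def sparseMu (q0 : ℝ) : Measure ℝ :=
  ENNReal.ofReal (1 - q0) • Measure.dirac (0 : ℝ) +
    ENNReal.ofReal q0 • volume.restrict (Set.Ioo (0 : ℝ) 1)

/-- The Q-MAP weight of a quantization cell `a` at bitrate `b`. -/
noncomputable def sparseWeight (q0 : ℝ) (b : ℕ) (a : ℤ) : ℝ :=
  - Real.logb 2 ((sparseMu q0 {x : ℝ | ⌊(2 : ℝ) ^ b * x⌋ = a}).toReal)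

lemma cell_eq (b : ℕ) (a : ℤ) :
    {x : ℝ | ⌊(2 : ℝ) ^ b * x⌋ = a} = Set.Ico ((a:ℝ)/2^b) (((a:ℝ)+1)/2^b) := by
  have h2 : (0:ℝ) < 2^b := by positivity
  ext x
  simp only [Set.mem_setOf_eq, Set.mem_Ico, Int.floor_eq_iff, div_le_iff₀ h2, lt_div_iff₀ h2]
  constructor <;> rintro ⟨h1', h2'⟩ <;>
    exact ⟨by nlinarith [mul_comm ((2:ℝ)^b) x], by nlinarith [mul_comm ((2:ℝ)^b) x]⟩

lemma mu_cell_zero (q0 : ℝ) (hq0 : 0 < q0) (hq1 : q0 < 1) (b : ℕ) (hb : 1 ≤ b) :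
    (sparseMu q0 {x : ℝ | ⌊(2 : ℝ) ^ b * x⌋ = 0}).toReal = (1 - q0) + q0 * ((2:ℝ)^b)⁻¹ := by
  have h2 : (0:ℝ) < 2^b := by positivity
  have hr1 : ((2:ℝ)^b)⁻¹ ≤ 1 := by
    rw [inv_le_one_iff₀]; right; exact one_le_pow₀ one_le_two
  rw [cell_eq]
  simp only [Int.cast_zero, zero_div, zero_add]
  have hinter : Set.Ico (0:ℝ) (1/2^b) ∩ Set.Ioo (0:ℝ) 1 = Set.Ioo (0:ℝ) (1/2^b) := by
    ext x
    simp only [Set.mem_inter_iff, Set.mem_Ico, Set.mem_Ioo]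
    constructor
    · rintro ⟨⟨_, h2'⟩, h3, _⟩; exact ⟨h3, h2'⟩
    · rintro ⟨h1', h2'⟩
      refine ⟨⟨le_of_lt h1', h2'⟩, h1', lt_of_lt_of_le h2' ?_⟩
      rw [one_div]; exact hr1
  rw [sparseMu, Measure.add_apply, Measure.smul_apply, Measure.smul_apply, smul_eq_mul,
    smul_eq_mul, Measure.dirac_apply' _ measurableSet_Ico,
    Measure.restrict_apply measurableSet_Ico, hinter]
  rw [Set.indicator_of_mem (by exact ⟨le_refl 0, by positivity⟩) (1 : ℝ → ℝ≥0∞)]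
  rw [Real.volume_Ioo]
  simp only [Pi.one_apply, mul_one, sub_zero, one_div]
  rw [← ENNReal.ofReal_mul (le_of_lt hq0), ← ENNReal.ofReal_add (by linarith) (by positivity),
    ENNReal.toReal_ofReal (by nlinarith [mul_pos hq0 (inv_pos.mpr h2)])]

lemma mu_cell_pos (q0 : ℝ) (hq0 : 0 < q0) (hq1 : q0 < 1) (b : ℕ) (a : ℤ)
    (ha : 1 ≤ a) (ha2 : (a:ℝ) + 1 ≤ 2^b) :
    (sparseMu q0 {x : ℝ | ⌊(2 : ℝ) ^ b * x⌋ = a}).toReal = q0 * ((2:ℝ)^b)⁻¹ := by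
  have h2 : (0:ℝ) < 2^b := by positivity
  have hl : (0:ℝ) < (a:ℝ)/2^b := by
    apply div_pos _ h2; exact_mod_cast lt_of_lt_of_le one_pos (by exact_mod_cast ha)
  rw [cell_eq]
  have hsub : Set.Ico ((a:ℝ)/2^b) (((a:ℝ)+1)/2^b) ⊆ Set.Ioo (0:ℝ) 1 := by
    rintro x ⟨h1', h2'⟩
    refine ⟨lt_of_lt_of_le hl h1', lt_of_lt_of_le h2' ?_⟩
    rw [div_le_one h2]; exact ha2
  rw [sparseMu, Measure.add_apply, Measure.smul_apply, Measure.smul_apply, smul_eq_mul,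
    smul_eq_mul, Measure.dirac_apply' _ measurableSet_Ico,
    Measure.restrict_apply measurableSet_Ico, Set.inter_eq_left.mpr hsub]
  rw [Set.indicator_of_notMem (by rintro ⟨h1', _⟩; linarith) (1 : ℝ → ℝ≥0∞)]
  rw [Real.volume_Ico]
  have : ((a:ℝ)+1)/2^b - (a:ℝ)/2^b = ((2:ℝ)^b)⁻¹ := by field_simp; ring
  rw [this, mul_zero, zero_add, ← ENNReal.ofReal_mul (le_of_lt hq0),
    ENNReal.toReal_ofReal (by positivity)]

lemma weight_zero (q0 : ℝ) (hq0 : 0 < q0) (hq1 : q0 < 1) (b : ℕ) (hb : 1 ≤ b) :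
    sparseWeight q0 b 0 = - Real.logb 2 ((1 - q0) + q0 * ((2:ℝ)^b)⁻¹) := by
  rw [sparseWeight, mu_cell_zero q0 hq0 hq1 b hb]

lemma weight_pos (q0 : ℝ) (hq0 : 0 < q0) (hq1 : q0 < 1) (b : ℕ) (a : ℤ)
    (ha : 1 ≤ a) (ha2 : (a:ℝ) + 1 ≤ 2^b) :
    sparseWeight q0 b a = (b : ℝ) - Real.logb 2 q0 := by
  rw [sparseWeight, mu_cell_pos q0 hq0 hq1 b a ha ha2,
    Real.logb_mul (ne_of_gt hq0) (by positivity), Real.logb_inv]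
  have : Real.logb 2 ((2:ℝ)^b) = b := by
    rw [Real.logb_pow]; simp
  rw [this]; ring

/-- The weight of the zero cell. -/
noncomputable def W0 (q0 : ℝ) (b : ℕ) : ℝ :=
  - Real.logb 2 ((1 - q0) + q0 * ((2:ℝ)^b)⁻¹)

lemma W0_bound (q0 : ℝ) (hq0 : 0 < q0) (hq1 : q0 < 1) (b : ℕ) (hb : 1 ≤ b) :
    |W0 q0 b| ≤ |Real.logb 2 (1 - q0)| := by
  have h2 : (0:ℝ) < 2^b := by positivity
  have hr0 : (0:ℝ) < ((2:ℝ)^b)⁻¹ := by positivity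
  have hr1 : ((2:ℝ)^b)⁻¹ ≤ 1 := by
    rw [inv_le_one_iff₀]; right; exact one_le_pow₀ one_le_two
  set t := (1 - q0) + q0 * ((2:ℝ)^b)⁻¹ with ht
  have ht1 : 1 - q0 ≤ t := by rw [ht]; nlinarith
  have ht2 : t ≤ 1 := by rw [ht]; nlinarith
  have h1q : (0:ℝ) < 1 - q0 := by linarith
  have hlog1 : Real.logb 2 t ≤ 0 := Real.logb_nonpos one_lt_two (by linarith) ht2
  have hlog2 : Real.logb 2 (1 - q0) ≤ Real.logb 2 t :=
    Real.logb_le_logb_of_le one_lt_two h1q ht1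
  rw [W0, abs_of_nonneg (by linarith)]
  calc -Real.logb 2 t ≤ -Real.logb 2 (1 - q0) := by linarith
    _ ≤ |Real.logb 2 (1 - q0)| := neg_le_abs _

lemma key_sum (q0 : ℝ) (hq0 : 0 < q0) (hq1 : q0 < 1) (b : ℕ) (hb : 1 ≤ b)
    (n : ℕ) (u : ℕ → ℝ) (hu : ∀ i ∈ Finset.Icc 1 n, u i ∈ Set.Ico (0 : ℝ) 1) :
    (1 / b : ℝ) * (∑ i ∈ Finset.Icc 1 n, sparseWeight q0 b ⌊(2 : ℝ) ^ b * u i⌋) =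
      (1 + (-(Real.logb 2 q0) - W0 q0 b) / b) *
        ((Finset.Icc 1 n).filter (fun i => ⌊(2 : ℝ) ^ b * u i⌋ ≠ 0)).card
      + n * W0 q0 b / b := by
  have h2 : (0:ℝ) < 2^b := by positivity
  have hbpos : (0:ℝ) < b := by exact_mod_cast Nat.lt_of_lt_of_le Nat.zero_lt_one hb
  rw [← Finset.sum_filter_add_sum_filter_not (Finset.Icc 1 n)
    (fun i => ⌊(2 : ℝ) ^ b * u i⌋ ≠ 0)]
  have e1 : ∀ i ∈ (Finset.Icc 1 n).filter (fun i => ⌊(2 : ℝ) ^ b * u i⌋ ≠ 0),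
      sparseWeight q0 b ⌊(2 : ℝ) ^ b * u i⌋ = (b : ℝ) - Real.logb 2 q0 := by
    intro i hi
    rw [Finset.mem_filter] at hi
    obtain ⟨hi1, hi2⟩ := hi
    obtain ⟨hu0, hu1⟩ := hu i hi1
    have ha0 : 0 ≤ ⌊(2 : ℝ) ^ b * u i⌋ := Int.floor_nonneg.mpr (by positivity)
    have ha1 : 1 ≤ ⌊(2 : ℝ) ^ b * u i⌋ := by omega
    have hlt : ((⌊(2 : ℝ) ^ b * u i⌋ : ℝ)) < 2^b :=
      lt_of_le_of_lt (Int.floor_le _) (by nlinarith)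
    have hlt' : ⌊(2 : ℝ) ^ b * u i⌋ < (2:ℤ)^b := by
      exact_mod_cast (by push_cast; exact hlt :
        ((⌊(2 : ℝ) ^ b * u i⌋ : ℝ)) < ((2:ℤ)^b : ℤ))
    exact weight_pos q0 hq0 hq1 b _ ha1
      (by push_cast; exact_mod_cast Int.add_one_le_iff.mpr hlt')
  have e2 : ∀ i ∈ (Finset.Icc 1 n).filter (fun i => ¬⌊(2 : ℝ) ^ b * u i⌋ ≠ 0),
      sparseWeight q0 b ⌊(2 : ℝ) ^ b * u i⌋ = W0 q0 b := by
    intro i hi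
    rw [Finset.mem_filter] at hi
    rw [not_not.mp hi.2]
    exact weight_zero q0 hq0 hq1 b hb
  rw [Finset.sum_congr rfl e1, Finset.sum_congr rfl e2, Finset.sum_const, Finset.sum_const,
    nsmul_eq_mul, nsmul_eq_mul]
  have hcard : (((Finset.Icc 1 n).filter (fun i => ⌊(2 : ℝ) ^ b * u i⌋ ≠ 0)).card : ℝ)
      + (((Finset.Icc 1 n).filter (fun i => ¬⌊(2 : ℝ) ^ b * u i⌋ ≠ 0)).card : ℝ) = n := by
    have h := Finset.card_filter_add_card_filter_not
      (s := Finset.Icc 1 n) (p := fun i => ⌊(2 : ℝ) ^ b * u i⌋ ≠ 0)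
    rw [Nat.card_Icc, Nat.add_sub_cancel] at h
    exact_mod_cast h
  have hbne : (b:ℝ) ≠ 0 := ne_of_gt hbpos
  have hb1 : (b:ℝ) * (b:ℝ)⁻¹ = 1 := mul_inv_cancel₀ hbne
  linear_combination (W0 q0 b / b) * hcard +
    ((((Finset.Icc 1 n).filter (fun i => ⌊(2 : ℝ) ^ b * u i⌋ ≠ 0)).card : ℝ)) * hb1

theorem stmt_13 (q0 : ℝ) (hq0 : 0 < q0) (hq1 : q0 < 1) :
    ∃ C : ℝ, ∃ γ : ℕ → ℝ, ∃ κ : ℕ → ℕ → ℝ,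
      ∀ b : ℕ, 1 ≤ b →
        |γ b| ≤ C / b ∧
        ∀ n : ℕ, ∀ u : ℕ → ℝ, (∀ i ∈ Finset.Icc 1 n, u i ∈ Set.Ico (0 : ℝ) 1) →
          (1 / b : ℝ) * (∑ i ∈ Finset.Icc 1 n, sparseWeight q0 b ⌊(2 : ℝ) ^ b * u i⌋) =
            (1 + γ b) *
              ((Finset.Icc 1 n).filter (fun i => ⌊(2 : ℝ) ^ b * u i⌋ ≠ 0)).card + κ n b ∧
          (∀ lam : ℝ, 0 < lam → ∀ y : ℕ → ℝ,
            ((∀ w : ℕ → ℝ, (∀ i ∈ Finset.Icc 1 n, w i ∈ Set.Ico (0 : ℝ) 1) →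
                (∑ i ∈ Finset.Icc 1 n, (y i - u i) ^ 2) +
                  (lam / b) * ∑ i ∈ Finset.Icc 1 n, sparseWeight q0 b ⌊(2 : ℝ) ^ b * u i⌋ ≤
                (∑ i ∈ Finset.Icc 1 n, (y i - w i) ^ 2) +
                  (lam / b) * ∑ i ∈ Finset.Icc 1 n, sparseWeight q0 b ⌊(2 : ℝ) ^ b * w i⌋)
              ↔
             (∀ w : ℕ → ℝ, (∀ i ∈ Finset.Icc 1 n, w i ∈ Set.Ico (0 : ℝ) 1) →
                (∑ i ∈ Finset.Icc 1 n, (y i - u i) ^ 2) +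
                  lam * (1 + γ b) *
                    ((Finset.Icc 1 n).filter (fun i => ⌊(2 : ℝ) ^ b * u i⌋ ≠ 0)).card ≤
                (∑ i ∈ Finset.Icc 1 n, (y i - w i) ^ 2) +
                  lam * (1 + γ b) *
                    ((Finset.Icc 1 n).filter (fun i => ⌊(2 : ℝ) ^ b * w i⌋ ≠ 0)).card))) := by
  refine ⟨|Real.logb 2 q0| + |Real.logb 2 (1 - q0)|,
    fun b => (-(Real.logb 2 q0) - W0 q0 b) / b,
    fun n b => n * W0 q0 b / b, ?_⟩
  intro b hb
  have hbpos : (0:ℝ) < b := by exact_mod_cast Nat.lt_of_lt_of_le Nat.zero_lt_one hb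
  constructor
  · rw [abs_div, abs_of_pos hbpos]
    gcongr
    have hW := W0_bound q0 hq0 hq1 b hb
    calc |(-(Real.logb 2 q0) - W0 q0 b)|
        = |(-(Real.logb 2 q0)) + (-(W0 q0 b))| := by ring_nf
      _ ≤ |(-(Real.logb 2 q0))| + |(-(W0 q0 b))| := abs_add_le _ _
      _ = |Real.logb 2 q0| + |W0 q0 b| := by rw [abs_neg, abs_neg]
      _ ≤ _ := by linarith
  · intro n u hu
    have eu := key_sum q0 hq0 hq1 b hb n u hu
    refine ⟨eu, ?_⟩
    intro lam hlam y
    have trans : ∀ v : ℕ → ℝ, (∀ i ∈ Finset.Icc 1 n, v i ∈ Set.Ico (0 : ℝ) 1) →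
        (lam / b) * ∑ i ∈ Finset.Icc 1 n, sparseWeight q0 b ⌊(2 : ℝ) ^ b * v i⌋ =
        lam * (1 + (-(Real.logb 2 q0) - W0 q0 b) / b) *
          ((Finset.Icc 1 n).filter (fun i => ⌊(2 : ℝ) ^ b * v i⌋ ≠ 0)).card
        + lam * (n * W0 q0 b / b) := by
      intro v hv
      have ev := key_sum q0 hq0 hq1 b hb n v hv
      have : (lam / b) * ∑ i ∈ Finset.Icc 1 n, sparseWeight q0 b ⌊(2 : ℝ) ^ b * v i⌋
          = lam * ((1 / b : ℝ) * ∑ i ∈ Finset.Icc 1 n,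
              sparseWeight q0 b ⌊(2 : ℝ) ^ b * v i⌋) := by ring
      rw [this, ev]; ring
    constructor
    · intro H w hw
      have h1 := H w hw
      rw [trans u hu, trans w hw] at h1
      linarith
    · intro H w hw
      have h1 := H w hw
      rw [trans u hu, trans w hw]
      linarith
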